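/- Suppose A_ε and A are self-adjoint non-negative operators on Hilbert spaces H_ε and H, J_ε : H → H_ε and J̌_ε : H_ε → H are bounded linear operators satisfying ‖J̌_ε(A_ε+I)^{-1} − (A+I)^{-1}J̌_ε‖ ≤ δ̌_ε and ‖u‖² ≤ ‖J̌_ε u‖² + ν̌_ε·⟨A_ε u, u⟩ for all u ∈ dom(A_ε). Fix d ∈ (0,1) with ν̌_ε < d/(1−d). Then every z ∈ σ((A_ε+I)^{-1}) ∩ [d,1] satisfies dist(z, σ((A+I)^{-1})) ≤ δ̌_ε / √(1 − ν̌_ε(d^{-1}−1)). -/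

import Mathlib

open MeasureTheory

local notation "⟪" x ", " y "⟫" => @inner ℂ _ _ x y

set_option maxHeartbeats 1000000

open Pointwise

lemma aux_sa_algebraMap {E : Type*} [NormedAddCommGroup E] [InnerProductSpace ℂ E]
    [CompleteSpace E] (z : ℝ) : IsSelfAdjoint (algebraMap ℂ (E →L[ℂ] E) (z : ℂ)) :=
  IsSelfAdjoint.algebraMap _ (by simp [IsSelfAdjoint, Complex.conj_ofReal])

/-- A self-adjoint bounded-below operator on a complex Hilbert space is invertible. -/
lemma aux_isUnit_of_bddBelow {E : Type*} [NormedAddCommGroup E] [InnerProductSpace ℂ E]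
    [CompleteSpace E] (T : E →L[ℂ] E) (hT : IsSelfAdjoint T) {c : ℝ} (hc : 0 < c)
    (h : ∀ x, c * ‖x‖ ≤ ‖T x‖) : IsUnit T := by
  rw [ContinuousLinearMap.isUnit_iff_bijective,
    ContinuousLinearMap.bijective_iff_dense_range_and_antilipschitz]
  have h_anti : AntilipschitzWith c.toNNReal⁻¹ T := by
    refine T.antilipschitz_of_bound fun x => ?_
    rw [NNReal.coe_inv, Real.coe_toNNReal _ hc.le, inv_mul_eq_div, le_div_iff₀ hc]
    linarith [h x]
  refine ⟨?_, ⟨_, h_anti⟩⟩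
  have _inst := h_anti.completeSpace_range_clm
  rw [Submodule.topologicalClosure_eq_top_iff, Submodule.eq_bot_iff]
  intro x hx
  have hTx : T x = 0 := by
    have h1 : ⟪T (T x), x⟫ = 0 := hx (T (T x)) ⟨T x, rfl⟩
    have h2 : ⟪T (T x), x⟫ = ⟪T x, T x⟫ := hT.isSymmetric (T x) x
    rw [h2] at h1
    exact inner_self_eq_zero.mp h1
  have h3 := h x
  rw [hTx, norm_zero] at h3
  have hx0 : ‖x‖ ≤ 0 := by nlinarith
  simpa using le_antisymm hx0 (norm_nonneg x)

/-- Weyl criterion: approximate eigenvectors for a real spectral point of a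
self-adjoint operator. -/
lemma aux_weyl {E : Type*} [NormedAddCommGroup E] [InnerProductSpace ℂ E]
    [CompleteSpace E] (T : E →L[ℂ] E) (hT : IsSelfAdjoint T) (z : ℝ)
    (hz : (z : ℂ) ∈ spectrum ℂ T) {c : ℝ} (hc : 0 < c) :
    ∃ ψ : E, ‖ψ‖ = 1 ∧ ‖T ψ - (z : ℂ) • ψ‖ ≤ c := by
  by_contra hcon
  push_neg at hcon
  set S : E →L[ℂ] E := algebraMap ℂ (E →L[ℂ] E) (z : ℂ) - T with hS
  have hSsa : IsSelfAdjoint S := (aux_sa_algebraMap z).sub hT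
  have hSx : ∀ x : E, S x = (z : ℂ) • x - T x := by
    intro x
    simp [hS, Algebra.algebraMap_eq_smul_one]
  have hbdd : ∀ x, c * ‖x‖ ≤ ‖S x‖ := by
    intro x
    rcases eq_or_ne x 0 with rfl | hx0
    · simp
    · have hnx : (0 : ℝ) < ‖x‖ := norm_pos_iff.mpr hx0
      have hψ : ‖(‖x‖⁻¹ : ℂ) • x‖ = 1 := by
        rw [norm_smul]
        simp [norm_inv, hnx.ne']
      have := hcon ((‖x‖⁻¹ : ℂ) • x) hψ
      have hTψ : T ((‖x‖⁻¹ : ℂ) • x) - (z : ℂ) • ((‖x‖⁻¹ : ℂ) • x)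
          = (‖x‖⁻¹ : ℂ) • (T x - (z : ℂ) • x) := by
        rw [ContinuousLinearMap.map_smul, smul_sub, smul_comm]
      rw [hTψ, norm_smul] at this
      have hni : ‖(‖x‖⁻¹ : ℂ)‖ = ‖x‖⁻¹ := by
        simp [norm_inv]
      rw [hni] at this
      have : c * ‖x‖ ≤ ‖T x - (z : ℂ) • x‖ := by
        rw [inv_mul_eq_div, lt_div_iff₀ hnx] at this
        linarith
      calc c * ‖x‖ ≤ ‖T x - (z : ℂ) • x‖ := this
        _ = ‖S x‖ := by rw [hSx, norm_sub_rev]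
  have : IsUnit S := aux_isUnit_of_bddBelow S hSsa hc hbdd
  exact (spectrum.mem_iff.mp hz) this

/-- Resolvent bound: for self-adjoint `R` and real `z` at positive distance `t` from the
spectrum, `t‖φ‖ ≤ ‖(z - R)φ‖`. -/
lemma aux_resolvent {E : Type*} [NormedAddCommGroup E] [InnerProductSpace ℂ E]
    [CompleteSpace E] (R : E →L[ℂ] E) (hR : IsSelfAdjoint R) (z : ℝ)
    (ht : 0 < Metric.infDist (z : ℂ) (spectrum ℂ R)) (φ : E) :
    Metric.infDist (z : ℂ) (spectrum ℂ R) * ‖φ‖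
      ≤ ‖(z : ℂ) • φ - R φ‖ := by
  set t := Metric.infDist (z : ℂ) (spectrum ℂ R) with htdef
  set S : E →L[ℂ] E := algebraMap ℂ (E →L[ℂ] E) (z : ℂ) - R with hS
  have hSsa : IsSelfAdjoint S := (aux_sa_algebraMap z).sub hR
  have hz : (z : ℂ) ∉ spectrum ℂ R := by
    intro hmem
    have := Metric.infDist_zero_of_mem hmem
    rw [← htdef] at this
    linarith
  obtain ⟨u, hu⟩ : IsUnit S := spectrum.notMem_iff.mp hz
  -- the inverse is self-adjoint
  have hinv_sa : IsSelfAdjoint ((↑u⁻¹ : E →L[ℂ] E)) := by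
    have h1 : (↑u⁻¹ : E →L[ℂ] E) * S = 1 := by rw [← hu]; exact u.inv_mul
    have h2 : S * (↑u⁻¹ : E →L[ℂ] E) = 1 := by rw [← hu]; exact u.mul_inv
    have h3 : S * star (↑u⁻¹ : E →L[ℂ] E) = 1 := by
      calc S * star (↑u⁻¹ : E →L[ℂ] E)
          = star ((↑u⁻¹ : E →L[ℂ] E) * S) := by rw [star_mul, hSsa.star_eq]
        _ = 1 := by rw [h1, star_one]
    calc star (↑u⁻¹ : E →L[ℂ] E)
        = ((↑u⁻¹ : E →L[ℂ] E) * S) * star (↑u⁻¹ : E →L[ℂ] E) := by rw [h1, one_mul]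
      _ = (↑u⁻¹ : E →L[ℂ] E) * (S * star (↑u⁻¹ : E →L[ℂ] E)) := by rw [mul_assoc]
      _ = (↑u⁻¹ : E →L[ℂ] E) := by rw [h3, mul_one]
  -- spectral radius bound for the inverse
  set τ : NNReal := ⟨t, ht.le⟩ with hτ
  have hτ0 : τ ≠ 0 := by
    simp only [hτ, ne_eq, ← NNReal.coe_eq_zero]
    exact fun h => ht.ne' (congrArg NNReal.toReal h)
  have hspec : ∀ k ∈ spectrum ℂ ((↑u⁻¹ : E →L[ℂ] E)), ‖k‖₊ ≤ τ⁻¹ := by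
    intro k hk
    have hk0 : k ≠ 0 := by
      intro h0
      rw [h0] at hk
      exact spectrum.zero_notMem ℂ u⁻¹.isUnit hk
    have hkinv : k⁻¹ ∈ spectrum ℂ ((↑u : E →L[ℂ] E)) := by
      have := (spectrum.inv_mem_iff (r := Units.mk0 k hk0) (a := u⁻¹)).mp hk
      simpa using this
    rw [hu] at hkinv
    have hsub : k⁻¹ ∈ ({(z : ℂ)} : Set ℂ) - spectrum ℂ R := by
      rw [spectrum.singleton_sub_eq]
      exact hkinv
    obtain ⟨x, hx, w, hw, hxw⟩ := Set.mem_sub.mp hsub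
    rw [Set.mem_singleton_iff] at hx
    subst hx
    have hdist : t ≤ dist ((z : ℂ)) w := Metric.infDist_le_dist_of_mem hw
    have hknorm : ‖k‖ ≤ t⁻¹ := by
      have hkinv_norm : t ≤ ‖k⁻¹‖ := by rw [← hxw, ← dist_eq_norm]; exact hdist
      rw [norm_inv] at hkinv_norm
      have hknz : (0 : ℝ) < ‖k‖ := norm_pos_iff.mpr hk0
      rw [le_inv_comm₀ ht hknz] at hkinv_norm
      exact hkinv_norm
    rw [← NNReal.coe_le_coe]
    rw [NNReal.coe_inv, coe_nnnorm]; exact hknorm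
  have hrad : ‖(↑u⁻¹ : E →L[ℂ] E)‖₊ ≤ τ⁻¹ := by
    have h1 := hinv_sa.spectralRadius_eq_nnnorm
    have h2 : spectralRadius ℂ ((↑u⁻¹ : E →L[ℂ] E)) ≤ (τ⁻¹ : NNReal) := by
      rw [spectralRadius]
      exact iSup₂_le fun k hk => ENNReal.coe_le_coe.mpr (hspec k hk)
    rw [h1] at h2
    exact_mod_cast h2
  have hnorm : ‖(↑u⁻¹ : E →L[ℂ] E)‖ ≤ t⁻¹ := by
    have := hrad
    rw [← NNReal.coe_le_coe] at this
    have hcoe : ((τ⁻¹ : NNReal) : ℝ) = t⁻¹ := by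
      rw [NNReal.coe_inv]; rfl
    rw [hcoe] at this
    exact this
  -- conclude
  have happ : (↑u⁻¹ : E →L[ℂ] E) (S φ) = φ := by
    rw [← ContinuousLinearMap.mul_apply, ← hu, u.inv_mul, ContinuousLinearMap.one_apply]
  have hφ : ‖φ‖ ≤ t⁻¹ * ‖S φ‖ := by
    calc ‖φ‖ = ‖(↑u⁻¹ : E →L[ℂ] E) (S φ)‖ := by rw [happ]
      _ ≤ ‖(↑u⁻¹ : E →L[ℂ] E)‖ * ‖S φ‖ := ContinuousLinearMap.le_opNorm _ _
      _ ≤ t⁻¹ * ‖S φ‖ := by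
          apply mul_le_mul_of_nonneg_right hnorm (norm_nonneg _)
  have hSφ : S φ = (z : ℂ) • φ - R φ := by
    simp [hS, Algebra.algebraMap_eq_smul_one]
  rw [← hSφ]
  calc t * ‖φ‖ ≤ t * (t⁻¹ * ‖S φ‖) := by
        apply mul_le_mul_of_nonneg_left hφ ht.le
    _ = ‖S φ‖ := by field_simp


section ArithAux

lemma arith_usq {z eps n : ℝ} (hz1 : z ≤ 1) (heps0 : 0 < eps) (hlb : z - eps ≤ n)
    (hze : 0 ≤ z - eps) : z ^ 2 - 2 * eps ≤ n ^ 2 := by nlinarith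

lemma arith_Ju {z eps a J m : ℝ} (hm0 : 0 ≤ m) (hmle : m ≤ z * a + J * eps)
    (hz0 : 0 ≤ z) (hz1 : z ≤ 1) (ha0 : 0 ≤ a) (haJ : a ≤ J) (hJ0 : 0 ≤ J)
    (heps0 : 0 < eps) (heps1 : eps ≤ 1) : m ^ 2 ≤ z ^ 2 * a ^ 2 + 3 * J ^ 2 * eps := by
  have hza : z * a ≤ J := by nlinarith
  have h2 : m * m ≤ (z * a + J * eps) * (z * a + J * eps) :=
    mul_le_mul hmle hmle hm0 (by positivity)
  have p1 : z * a * (J * eps) ≤ J * (J * eps) :=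
    mul_le_mul_of_nonneg_right hza (by positivity)
  have p2 : (J * eps) * (J * eps) ≤ (J * J) * eps := by nlinarith
  nlinarith

lemma arith_beta {z d eps a J nu : ℝ} (hd0 : 0 < d) (hd1 : d < 1) (hdz : d ≤ z)
    (hz1 : z ≤ 1) (heps0 : 0 < eps) (hnu0 : 0 ≤ nu) (ha0 : 0 ≤ a)
    (hcomb : z ^ 2 - 2 * eps ≤ z ^ 2 * a ^ 2 + 3 * J ^ 2 * eps
      + nu * (z - z ^ 2 + 3 * eps)) :
    1 - nu * (d⁻¹ - 1) ≤ a ^ 2 + ((2 + 3 * J ^ 2 + 3 * nu) / d ^ 2) * eps := by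
  have hzpos : 0 < z := lt_of_lt_of_le hd0 hdz
  have hdd : d * d⁻¹ = 1 := mul_inv_cancel₀ hd0.ne'
  have hJ2 : (0:ℝ) ≤ J ^ 2 := sq_nonneg J
  have hCpos : 0 ≤ (2 + 3 * J ^ 2 + 3 * nu) / d ^ 2 := by positivity
  rcases le_or_gt (1 - nu * (d⁻¹ - 1)) (a ^ 2) with hba | hba
  · nlinarith [mul_nonneg hCpos heps0.le]
  · have hstep : z * (1 - z) ≤ z ^ 2 * (d⁻¹ - 1) := by nlinarith
    have h6 : nu * (z * (1 - z)) ≤ nu * (z ^ 2 * (d⁻¹ - 1)) :=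
      mul_le_mul_of_nonneg_left hstep hnu0
    have h5 : z ^ 2 * (1 - a ^ 2 - nu * (d⁻¹ - 1)) ≤ (2 + 3 * J ^ 2 + 3 * nu) * eps := by
      nlinarith
    have hz2 : d ^ 2 ≤ z ^ 2 := by nlinarith
    have h8 : 0 ≤ 1 - a ^ 2 - nu * (d⁻¹ - 1) := by linarith
    have h7 : d ^ 2 * (1 - a ^ 2 - nu * (d⁻¹ - 1)) ≤ (2 + 3 * J ^ 2 + 3 * nu) * eps := by
      nlinarith [mul_le_mul_of_nonneg_right hz2 h8]
    have hCd : ((2 + 3 * J ^ 2 + 3 * nu) / d ^ 2) * d ^ 2 = 2 + 3 * J ^ 2 + 3 * nu := by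
      field_simp
    nlinarith [mul_pos hd0 hd0]

lemma arith_final {t b a C eps del J : ℝ} (ht : 0 ≤ t) (ha0 : 0 ≤ a) (hC0 : 0 ≤ C)
    (heps0 : 0 ≤ eps) (hba : b ≤ a ^ 2 + C * eps) (h9 : t * a ≤ del + J * eps)
    (hdJ : 0 ≤ del + J * eps) :
    t ^ 2 * b ≤ (del + J * eps) ^ 2 + t ^ 2 * C * eps := by
  have h13 : (t * a) ^ 2 ≤ (del + J * eps) ^ 2 := by nlinarith [mul_nonneg ht ha0]
  have h14 : t ^ 2 * b ≤ t ^ 2 * (a ^ 2 + C * eps) :=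
    mul_le_mul_of_nonneg_left hba (sq_nonneg t)
  nlinarith [sq_nonneg t]

end ArithAux


/-- one-sided Hausdorff estimate for spectra of resolvents. If
`A_ε`, `A` are non-negative self-adjoint operators with resolvents
`R_ε = (A_ε+I)⁻¹`, `R = (A+I)⁻¹`, `J̌_ε : H_ε → H` is bounded with
`‖J̌_ε R_ε − R J̌_ε‖ ≤ δ̌_ε` and `‖u‖² ≤ ‖J̌_ε u‖² + ν̌_ε ⟪A_ε u, u⟫` on `dom A_ε`,
and `d ∈ (0,1)` with `ν̌_ε < d/(1−d)`, then every `z ∈ σ(R_ε) ∩ [d,1]` satisfies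
`dist(z, σ(R)) ≤ δ̌_ε / √(1 − ν̌_ε(d⁻¹ − 1))`. -/
theorem stmt13
    {H Hε : Type*}
    [NormedAddCommGroup H] [InnerProductSpace ℂ H] [CompleteSpace H]
    [NormedAddCommGroup Hε] [InnerProductSpace ℂ Hε] [CompleteSpace Hε]
    -- the operator `A_ε` with resolvent `R_ε`
    (domε : Submodule ℂ Hε) (hdenseε : Dense (domε : Set Hε))
    (Aε : domε →ₗ[ℂ] Hε)
    (hsymε : ∀ x y : domε, ⟪Aε x, (y : Hε)⟫ = ⟪(x : Hε), Aε y⟫)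
    (hnonnegε : ∀ x : domε, 0 ≤ (⟪Aε x, (x : Hε)⟫).re)
    (Rε : Hε →L[ℂ] Hε) (hRε : IsSelfAdjoint Rε)
    (hresε₁ : ∀ f : Hε, ∃ hf : Rε f ∈ domε, Aε ⟨Rε f, hf⟩ + Rε f = f)
    (hresε₂ : ∀ x : domε, Rε (Aε x + (x : Hε)) = (x : Hε))
    -- the operator `A` with resolvent `R`
    (dom : Submodule ℂ H) (hdense : Dense (dom : Set H))
    (A : dom →ₗ[ℂ] H)
    (hsym : ∀ x y : dom, ⟪A x, (y : H)⟫ = ⟪(x : H), A y⟫)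
    (hnonneg : ∀ x : dom, 0 ≤ (⟪A x, (x : H)⟫).re)
    (R : H →L[ℂ] H) (hR : IsSelfAdjoint R)
    (hres₁ : ∀ f : H, ∃ hf : R f ∈ dom, A ⟨R f, hf⟩ + R f = f)
    (hres₂ : ∀ x : dom, R (A x + (x : H)) = (x : H))
    -- the identification operator and the assumptions of the theorem
    (Jc : Hε →L[ℂ] H) (δc νc d : ℝ)
    (hδc : 0 ≤ δc) (hd0 : 0 < d) (hd1 : d < 1)
    (hνc0 : 0 ≤ νc) (hνc : νc < d / (1 - d))
    (hcomm : ‖Jc.comp Rε - R.comp Jc‖ ≤ δc)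
    (hJc : ∀ u : domε, ‖(u : Hε)‖ ^ 2 ≤ ‖Jc (u : Hε)‖ ^ 2 + νc * (⟪Aε u, (u : Hε)⟫).re) :
    ∀ z : ℝ, (z : ℂ) ∈ spectrum ℂ Rε → d ≤ z → z ≤ 1 →
      Metric.infDist (z : ℂ) (spectrum ℂ R) ≤ δc / Real.sqrt (1 - νc * (d⁻¹ - 1)) := by
  intro z hz hdz hz1
  have hzpos : 0 < z := lt_of_lt_of_le hd0 hdz
  set t := Metric.infDist (z : ℂ) (spectrum ℂ R) with htdef
  have h1d : 0 < 1 - d := by linarith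
  have hβpos : 0 < 1 - νc * (d⁻¹ - 1) := by
    have hfrac : d⁻¹ - 1 = (1 - d) / d := by field_simp
    have h2 : νc * ((1 - d) / d) < (d / (1 - d)) * ((1 - d) / d) := by
      apply mul_lt_mul_of_pos_right hνc
      positivity
    have h3 : (d / (1 - d)) * ((1 - d) / d) = 1 := by
      field_simp
    rw [hfrac]
    nlinarith
  set β := 1 - νc * (d⁻¹ - 1) with hβ
  have hrhs : 0 ≤ δc / Real.sqrt β := div_nonneg hδc (Real.sqrt_nonneg _)
  rcases le_or_gt t 0 with htle | htpos
  · linarith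
  have hres := aux_resolvent R hR z (htdef ▸ htpos)
  set J := ‖Jc‖ with hJ
  have hJ0 : 0 ≤ J := norm_nonneg _
  set C := (2 + 3 * J ^ 2 + 3 * νc) / d ^ 2 with hC
  have hC0 : 0 ≤ C := by positivity
  have hCdef : C * d ^ 2 = 2 + 3 * J ^ 2 + 3 * νc := by
    rw [hC]; field_simp
  have key : t ^ 2 * β ≤ δc ^ 2 := by
    have hev : ∀ᶠ ε in nhdsWithin (0 : ℝ) (Set.Ioi 0),
        t ^ 2 * β ≤ (δc + J * ε) ^ 2 + t ^ 2 * C * ε := by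
      filter_upwards [Ioo_mem_nhdsGT_of_mem
        (Set.mem_Ico.mpr ⟨le_refl (0 : ℝ), lt_min hd0 one_pos⟩)] with ε hε
      obtain ⟨hε0, hεlt⟩ := hε
      have hεd : ε < d := lt_of_lt_of_le hεlt (min_le_left _ _)
      have hε1 : ε < 1 := lt_of_lt_of_le hεlt (min_le_right _ _)
      obtain ⟨ψ, hψ1, hψε⟩ := aux_weyl Rε hRε z hz hε0
      obtain ⟨hmem, heq⟩ := hresε₁ ψ
      set u : domε := ⟨Rε ψ, hmem⟩ with hudef
      have hAu : Aε u = ψ - Rε ψ := eq_sub_of_add_eq heq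
      set w : Hε := Rε ψ - (z : ℂ) • ψ with hwdef
      have hw : ‖w‖ ≤ ε := hψε
      have hucoe : (u : Hε) = (z : ℂ) • ψ + w := by
        rw [hwdef]; simp [hudef]
      have hznorm : ‖((z : ℝ) : ℂ)‖ = z := by
        simp [Complex.norm_real, abs_of_pos hzpos]
      have hzψ : ‖(z : ℂ) • ψ‖ = z := by
        rw [norm_smul, hψ1, hznorm, mul_one]
      set a : ℝ := ‖Jc ψ‖ with ha
      have ha0 : 0 ≤ a := norm_nonneg _
      have haJ : a ≤ J := by
        have := Jc.le_opNorm ψ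
        rwa [hψ1, mul_one] at this
      -- lower bound on ‖u‖
      have hu_lb : z - ε ≤ ‖(u : Hε)‖ := by
        have h1 : ‖(z : ℂ) • ψ‖ ≤ ‖(u : Hε)‖ + ‖w‖ := by
          calc ‖(z : ℂ) • ψ‖ = ‖(u : Hε) - w‖ := by rw [hucoe, add_sub_cancel_right]
            _ ≤ ‖(u : Hε)‖ + ‖w‖ := norm_sub_le _ _
        rw [hzψ] at h1
        linarith
      have hu_sq : z ^ 2 - 2 * ε ≤ ‖(u : Hε)‖ ^ 2 :=
        arith_usq hz1 hε0 hu_lb (by linarith)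
      -- bound on the inner product term
      have hinner : (⟪Aε u, (u : Hε)⟫).re ≤ z - z ^ 2 + 3 * ε := by
        have e1 : ⟪Aε u, (u : Hε)⟫ = ⟪ψ, (u : Hε)⟫ - ⟪(u : Hε), (u : Hε)⟫ := by
          rw [hAu, inner_sub_left]
        have e2 : ⟪(u : Hε), (u : Hε)⟫ = ((‖(u : Hε)‖ ^ 2 : ℝ) : ℂ) := by
          rw [inner_self_eq_norm_sq_to_K]; norm_cast
        have e3 : ⟪ψ, (u : Hε)⟫ = (z : ℂ) + ⟪ψ, w⟫ := by
          rw [hucoe, inner_add_right, inner_smul_right, inner_self_eq_norm_sq_to_K, hψ1]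
          push_cast; ring
        have e4 : (⟪ψ, w⟫).re ≤ ε := by
          calc (⟪ψ, w⟫).re ≤ ‖⟪ψ, w⟫‖ := Complex.re_le_norm _
            _ ≤ ‖ψ‖ * ‖w‖ := norm_inner_le_norm _ _
            _ ≤ 1 * ε := by rw [hψ1]; simpa using hw
            _ = ε := one_mul ε
        have e5 : (⟪Aε u, (u : Hε)⟫).re = z + (⟪ψ, w⟫).re - ‖(u : Hε)‖ ^ 2 := by
          rw [e1, e3, e2]
          simp [Complex.add_re, Complex.sub_re, Complex.ofReal_re]
          norm_cast
        rw [e5]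
        linarith
      -- bound on ‖Jc u‖
      have hJu : ‖Jc (u : Hε)‖ ≤ z * a + J * ε := by
        have h1 : Jc (u : Hε) = (z : ℂ) • Jc ψ + Jc w := by
          rw [hucoe, map_add, ContinuousLinearMap.map_smul]
        calc ‖Jc (u : Hε)‖ ≤ ‖(z : ℂ) • Jc ψ‖ + ‖Jc w‖ := by rw [h1]; exact norm_add_le _ _
          _ ≤ z * a + J * ε := by
              rw [norm_smul, hznorm]
              have h2 : ‖Jc w‖ ≤ J * ε := by
                calc ‖Jc w‖ ≤ J * ‖w‖ := Jc.le_opNorm w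
                  _ ≤ J * ε := mul_le_mul_of_nonneg_left hw hJ0
              linarith
      have hJu2 : ‖Jc (u : Hε)‖ ^ 2 ≤ z ^ 2 * a ^ 2 + 3 * J ^ 2 * ε :=
        arith_Ju (norm_nonneg _) hJu hzpos.le hz1 ha0 haJ hJ0 hε0 hε1.le
      -- combine with the main hypothesis
      have hmain := hJc u
      have hcomb : z ^ 2 - 2 * ε ≤ z ^ 2 * a ^ 2 + 3 * J ^ 2 * ε
          + νc * (z - z ^ 2 + 3 * ε) := by
        have h3 : νc * (⟪Aε u, (u : Hε)⟫).re ≤ νc * (z - z ^ 2 + 3 * ε) :=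
          mul_le_mul_of_nonneg_left hinner hνc0
        linarith [hu_sq, hmain, hJu2]
      -- derive the lower bound on a²
      have hβa : β ≤ a ^ 2 + C * ε := by
        rw [hβ, hC]
        exact arith_beta hd0 hd1 hdz hz1 hε0 hνc0 ha0 hcomb
      -- residual bound
      have h9 : t * a ≤ δc + J * ε := by
        have h10 := hres (Jc ψ)
        have h11 : (z : ℂ) • (Jc ψ) - R (Jc ψ)
            = (Jc.comp Rε - R.comp Jc) ψ - Jc w := by
          rw [hwdef]
          simp only [ContinuousLinearMap.sub_apply, ContinuousLinearMap.comp_apply,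
            map_sub, ContinuousLinearMap.map_smul]
          abel
        have h12 : ‖(z : ℂ) • (Jc ψ) - R (Jc ψ)‖ ≤ δc + J * ε := by
          rw [h11]
          calc ‖(Jc.comp Rε - R.comp Jc) ψ - Jc w‖
              ≤ ‖(Jc.comp Rε - R.comp Jc) ψ‖ + ‖Jc w‖ := norm_sub_le _ _
            _ ≤ ‖Jc.comp Rε - R.comp Jc‖ * ‖ψ‖ + J * ‖w‖ :=
                add_le_add ((Jc.comp Rε - R.comp Jc).le_opNorm ψ) (Jc.le_opNorm w)
            _ ≤ δc + J * ε := by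
                rw [hψ1, mul_one]
                exact add_le_add hcomm (mul_le_mul_of_nonneg_left hw hJ0)
        exact le_trans h10 h12
      -- put everything together
      exact arith_final htpos.le ha0 hC0 hε0.le hβa h9
        (by positivity)
    have hlim : Filter.Tendsto (fun ε : ℝ => (δc + J * ε) ^ 2 + t ^ 2 * C * ε)
        (nhdsWithin 0 (Set.Ioi 0)) (nhds ((δc + J * 0) ^ 2 + t ^ 2 * C * 0)) :=
      ((Continuous.tendsto (by fun_prop) 0)).mono_left nhdsWithin_le_nhds
    have hfin := ge_of_tendsto hlim hev
    simpa using hfin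
  -- conclude from `key`
  have h2 : t * Real.sqrt β ≤ δc := by
    have he : t * Real.sqrt β = Real.sqrt (t ^ 2 * β) := by
      rw [Real.sqrt_mul (sq_nonneg t), Real.sqrt_sq htpos.le]
    rw [he]
    calc Real.sqrt (t ^ 2 * β) ≤ Real.sqrt (δc ^ 2) := Real.sqrt_le_sqrt key
      _ = δc := Real.sqrt_sq hδc
  exact (le_div_iff₀ (Real.sqrt_pos.mpr hβpos)).mpr h2
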